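/- Let P be a reversible stochastic matrix with Perron vector π and let Γ = {γ_{ij}} be a choice of one directed path γ_{ij} from i to j in G_P for each ordered pair of distinct nodes. Define the P-length |γ|_P = Σ_{(u,v)∈γ} (π_u P_{uv})^{-1} and κ̃(P) = max over edges e of G_P of Σ_{(i,j): e ∈ γ_{ij}} |γ_{ij}|_P π_i π_j. Then λ_2(P) ≤ 1 − 1/κ̃(P). -/

import Mathlib

open Finset Matrix

def IsStochastic {n : ℕ} (P : Matrix (Fin n) (Fin n) ℝ) : Prop :=
  (∀ i j, 0 ≤ P i j) ∧ ∀ i, ∑ j, P i j = 1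

def IsIrreducibleM {n : ℕ} (P : Matrix (Fin n) (Fin n) ℝ) : Prop :=
  ∀ i j, ∃ k : ℕ, 0 < (P ^ k) i j

def IsReversible {n : ℕ} (π : Fin n → ℝ) (P : Matrix (Fin n) (Fin n) ℝ) : Prop :=
  ∀ i j, π i * P i j = π j * P j i

/-- A list of vertices is a directed path from `i` to `j` in the graph of `P`. -/
def IsPathFrom {n : ℕ} (P : Matrix (Fin n) (Fin n) ℝ) (i j : Fin n)
    (l : List (Fin n)) : Prop :=
  l.head? = some i ∧ l.getLast? = some j ∧ 2 ≤ l.length ∧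
    ∀ e ∈ l.zip l.tail, 0 < P e.1 e.2

/-- The `P`-length of a path: `|γ|_P = ∑_{(u,v) ∈ γ} (π_u P_{uv})⁻¹`. -/
noncomputable def plen {n : ℕ} (π : Fin n → ℝ) (P : Matrix (Fin n) (Fin n) ℝ)
    (l : List (Fin n)) : ℝ :=
  ((l.zip l.tail).map (fun e => (π e.1 * P e.1 e.2)⁻¹)).sum

/-- The second largest eigenvalue: the supremum of eigenvalues admitting an
eigenvector `π`-orthogonal to the all-ones vector. -/
noncomputable def lambda2 {n : ℕ} (π : Fin n → ℝ) (P : Matrix (Fin n) (Fin n) ℝ) : ℝ :=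
  sSup {l : ℝ | ∃ x : Fin n → ℝ, x ≠ 0 ∧ (∑ i, π i * x i) = 0 ∧ P.mulVec x = l • x}



lemma DS.edges_append {α : Type*} : ∀ (u : List α) (a : α) (v : List α),
    (u ++ a :: v).zip (u ++ a :: v).tail
      = ((u ++ [a]).zip (u ++ [a]).tail) ++ ((a :: v).zip v)
  | [], a, v => by simp
  | [b], a, v => by simp
  | b :: c :: u, a, v => by
    have ih := DS.edges_append (c :: u) a v
    simp only [List.cons_append, List.zip_cons_cons, List.tail_cons] at *
    simp [ih]

lemma DS.sublist_pair_split {α : Type*} {a : α} {l : List α} (h : List.Sublist [a, a] l) :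
    ∃ l1 l2 l3, l = l1 ++ a :: l2 ++ a :: l3 := by
  induction l with
  | nil => simp at h
  | cons b t ih =>
    cases h with
    | cons _ h' =>
      obtain ⟨l1, l2, l3, rfl⟩ := ih h'
      exact ⟨b :: l1, l2, l3, rfl⟩
    | cons_cons _ h' =>
      obtain ⟨s, t', rfl⟩ := List.append_of_mem (List.singleton_sublist.mp h')
      exact ⟨[], s, t', rfl⟩

lemma DS.nodup_edges {α : Type*} : ∀ {l : List α}, l.Nodup → (l.zip l.tail).Nodup
  | [], _ => by simp
  | [a], _ => by simp
  | a :: b :: t, h => by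
    rw [List.nodup_cons] at h
    simp only [List.tail_cons, List.zip_cons_cons, List.nodup_cons]
    exact ⟨fun hmem => h.1 ((List.of_mem_zip hmem).1), DS.nodup_edges h.2⟩

lemma DS.telescope {α : Type*} (f : α → ℝ) : ∀ (l : List α) (i j : α), l.head? = some i →
    l.getLast? = some j → ((l.zip l.tail).map (fun e => f e.2 - f e.1)).sum = f j - f i
  | [], i, j => by simp
  | [a], i, j => by
    intro h1 h2
    simp at h1 h2
    subst h1; subst h2; simp
  | a :: b :: t, i, j => by
    intro h1 h2
    simp only [List.head?_cons, Option.some.injEq] at h1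
    subst h1
    have h2' : (b :: t).getLast? = some j := by
      rw [List.getLast?_cons_cons] at h2; exact h2
    have ih := DS.telescope f (b :: t) b j rfl h2'
    simp only [List.zip_cons_cons, List.tail_cons, List.map_cons, List.sum_cons] at *
    rw [ih]; ring

lemma DS.dedup_path {α : Type*} [DecidableEq α] (l : List α) (i j : α)
    (h1 : l.head? = some i) (h2 : l.getLast? = some j) :
    ∃ m : List α, m.Nodup ∧ m.head? = some i ∧ m.getLast? = some j ∧
      List.Sublist (m.zip m.tail) (l.zip l.tail) := by
  by_cases hd : l.Nodup
  · exact ⟨l, hd, h1, h2, List.Sublist.refl _⟩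
  · obtain ⟨a, ha⟩ := List.exists_duplicate_iff_not_nodup.2 hd
    obtain ⟨l1, l2, l3, rfl⟩ := DS.sublist_pair_split (List.duplicate_iff_sublist.1 ha)
    have hlen : (l1 ++ a :: l3).length < (l1 ++ a :: l2 ++ a :: l3).length := by
      simp
    have h1' : (l1 ++ a :: l3).head? = some i := by
      cases l1 with
      | nil => simpa using h1
      | cons b t => simpa using h1
    have h2' : (l1 ++ a :: l3).getLast? = some j := by
      cases l3 with
      | nil =>
        have : (l1 ++ a :: l2 ++ a :: ([] : List α)).getLast? = some a := by
          rw [List.getLast?_append_cons]; simp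
        rw [this] at h2
        rw [List.getLast?_append_cons]
        simpa using h2
      | cons c t =>
        rw [List.getLast?_append_cons]
        rw [show l1 ++ a :: l2 ++ a :: (c :: t) = (l1 ++ a :: l2) ++ a :: (c :: t) by simp,
          List.getLast?_append_cons] at h2
        exact h2
    obtain ⟨m, hm1, hm2, hm3, hm4⟩ := DS.dedup_path (l1 ++ a :: l3) i j h1' h2'
    refine ⟨m, hm1, hm2, hm3, hm4.trans ?_⟩
    rw [DS.edges_append l1 a l3]
    rw [show l1 ++ a :: l2 ++ a :: l3 = l1 ++ a :: (l2 ++ a :: l3) by simp,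
      DS.edges_append l1 a (l2 ++ a :: l3)]
    refine List.Sublist.append (List.Sublist.refl _) ?_
    rw [show (a :: (l2 ++ a :: l3)).zip (l2 ++ a :: l3)
        = ((a :: l2) ++ a :: l3).zip ((a :: l2) ++ a :: l3).tail by simp,
      DS.edges_append (a :: l2) a l3]
    exact List.sublist_append_right _ _
termination_by l.length

lemma DS.cs {n : ℕ} (Q : Fin n × Fin n → ℝ) (c : Fin n × Fin n → ℝ)
    (t : Finset (Fin n × Fin n)) (hQpos : ∀ e ∈ t, 0 < Q e) :
    (∑ e ∈ t, c e) ^ 2 ≤ (∑ e ∈ t, (Q e)⁻¹) * ∑ e ∈ t, Q e * c e ^ 2 := by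
  have hcs := Finset.sum_mul_sq_le_sq_mul_sq t
    (fun e => Real.sqrt ((Q e)⁻¹)) (fun e => Real.sqrt (Q e) * c e)
  have h1 : ∑ e ∈ t, Real.sqrt ((Q e)⁻¹) * (Real.sqrt (Q e) * c e) = ∑ e ∈ t, c e :=
    Finset.sum_congr rfl fun e he => by
      rw [Real.sqrt_inv, ← mul_assoc, inv_mul_cancel₀
        (Real.sqrt_ne_zero'.mpr (hQpos e he)), one_mul]
  have h2 : ∑ e ∈ t, Real.sqrt ((Q e)⁻¹) ^ 2 = ∑ e ∈ t, (Q e)⁻¹ :=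
    Finset.sum_congr rfl fun e he => Real.sq_sqrt (inv_nonneg.mpr (hQpos e he).le)
  have h3 : ∑ e ∈ t, (Real.sqrt (Q e) * c e) ^ 2 = ∑ e ∈ t, Q e * c e ^ 2 :=
    Finset.sum_congr rfl fun e he => by rw [mul_pow, Real.sq_sqrt (hQpos e he).le]
  rw [h1, h2, h3] at hcs
  exact hcs

lemma DS.sum_swap4 {n : ℕ} (F : Fin n → Fin n → Fin n → Fin n → ℝ) :
    ∑ i : Fin n, ∑ j : Fin n, ∑ u : Fin n, ∑ v : Fin n, F i j u v
      = ∑ u : Fin n, ∑ v : Fin n, ∑ i : Fin n, ∑ j : Fin n, F i j u v := by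
  calc ∑ i : Fin n, ∑ j : Fin n, ∑ u : Fin n, ∑ v : Fin n, F i j u v
      = ∑ i : Fin n, ∑ u : Fin n, ∑ j : Fin n, ∑ v : Fin n, F i j u v :=
        Finset.sum_congr rfl fun i _ => Finset.sum_comm
    _ = ∑ u : Fin n, ∑ i : Fin n, ∑ j : Fin n, ∑ v : Fin n, F i j u v := Finset.sum_comm
    _ = ∑ u : Fin n, ∑ i : Fin n, ∑ v : Fin n, ∑ j : Fin n, F i j u v :=
        Finset.sum_congr rfl fun u _ => Finset.sum_congr rfl fun i _ => Finset.sum_comm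
    _ = ∑ u : Fin n, ∑ v : Fin n, ∑ i : Fin n, ∑ j : Fin n, F i j u v :=
        Finset.sum_congr rfl fun u _ => Finset.sum_comm

set_option maxHeartbeats 1000000 in
lemma DS.eig_bound {n : ℕ} (P : Matrix (Fin n) (Fin n) ℝ) (π : Fin n → ℝ)
    (hPnn : ∀ i j, 0 ≤ P i j) (hProw : ∀ i, ∑ j, P i j = 1)
    (hπpos : ∀ i, 0 < π i) (hπsum : ∑ i, π i = 1)
    (hrev : IsReversible π P)
    (Γ : Fin n → Fin n → List (Fin n))
    (hΓpath : ∀ i j, i ≠ j → IsPathFrom P i j (Γ i j))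
    (κ' : ℝ) (hκpos : 0 < κ')
    (hκub : ∀ u v : Fin n, 0 < P u v →
      (∑ i : Fin n, ∑ j : Fin n, if i ≠ j ∧ (u, v) ∈ (Γ i j).zip (Γ i j).tail
        then plen π P (Γ i j) * π i * π j else 0) ≤ κ')
    (l : ℝ) (x : Fin n → ℝ) (hx0 : x ≠ 0)
    (horth : (∑ i, π i * x i) = 0) (heig : P.mulVec x = l • x) :
    l ≤ 1 - 1 / κ' := by
  classical
  have hPx : ∀ u, ∑ v, P u v * x v = l * x u := by
    intro u
    have := congrFun heig u
    simpa [Matrix.mulVec, dotProduct] using this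
  have hcol : ∀ v, ∑ u, π u * P u v = π v := by
    intro v
    calc ∑ u, π u * P u v = ∑ u, π v * P v u :=
          Finset.sum_congr rfl fun u _ => (hrev v u).symm ▸ (hrev u v)
      _ = π v := by rw [← Finset.mul_sum, hProw, mul_one]
  set nx2 := ∑ i, π i * x i ^ 2 with hnx2
  have hnxpos : 0 < nx2 := by
    obtain ⟨i0, hi0⟩ := Function.ne_iff.mp hx0
    refine Finset.sum_pos' (fun i _ => by have := hπpos i; positivity)
      ⟨i0, Finset.mem_univ _, ?_⟩
    have h1 := hπpos i0
    have h2 : x i0 ≠ 0 := hi0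
    positivity
  -- Dirichlet identity
  have hA : ∑ u, ∑ v, π u * P u v * x u ^ 2 = nx2 := by
    refine Finset.sum_congr rfl fun u _ => ?_
    rw [Finset.sum_congr rfl (fun v _ => show π u * P u v * x u ^ 2
      = (π u * x u ^ 2) * P u v by ring), ← Finset.mul_sum, hProw, mul_one]
  have hB : ∑ u, ∑ v, π u * (P u v * x v) * x u = l * nx2 := by
    rw [Finset.sum_congr rfl (fun u _ => show ∑ v, π u * (P u v * x v) * x u
      = l * (π u * x u ^ 2) from by
        rw [Finset.sum_congr rfl (fun v _ => show π u * (P u v * x v) * x u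
          = (π u * x u) * (P u v * x v) by ring), ← Finset.mul_sum, hPx u]; ring),
      ← Finset.mul_sum]
  have hC : ∑ u, ∑ v, π u * P u v * x v ^ 2 = nx2 := by
    rw [Finset.sum_comm]
    refine Finset.sum_congr rfl fun v _ => ?_
    rw [Finset.sum_congr rfl (fun u _ => show π u * P u v * x v ^ 2
      = x v ^ 2 * (π u * P u v) by ring), ← Finset.mul_sum, hcol]; ring
  have hdir : ∑ u, ∑ v, π u * P u v * (x u - x v) ^ 2 = 2 * (1 - l) * nx2 := by
    have expand : ∀ u v : Fin n, π u * P u v * (x u - x v) ^ 2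
        = (π u * P u v * x u ^ 2 + π u * P u v * x v ^ 2)
          - 2 * (π u * (P u v * x v) * x u) := fun u v => by ring
    simp_rw [expand, Finset.sum_sub_distrib, Finset.sum_add_distrib, ← Finset.mul_sum]
    rw [hA, hB, hC]; ring
  -- Variance identity
  have hπx : ∑ i, π i * x i = 0 := horth
  have hvar : ∑ i, ∑ j, π i * π j * (x i - x j) ^ 2 = 2 * nx2 := by
    have expand : ∀ i j : Fin n, π i * π j * (x i - x j) ^ 2
        = ((π i * x i ^ 2) * π j + (π j * x j ^ 2) * π i)
          - 2 * ((π i * x i) * (π j * x j)) := fun i j => by ring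
    simp_rw [expand, Finset.sum_sub_distrib, Finset.sum_add_distrib]
    simp_rw [← Finset.sum_mul, ← Finset.mul_sum, hπsum, hπx]
    simp [hπx, hnx2]
    ring
  -- dedup paths
  have hex : ∀ i j : Fin n, ∃ m : List (Fin n), i ≠ j →
      m.Nodup ∧ m.head? = some i ∧ m.getLast? = some j ∧
        List.Sublist (m.zip m.tail) ((Γ i j).zip (Γ i j).tail) := by
    intro i j
    by_cases hij : i ≠ j
    · obtain ⟨hh, hl, _, _⟩ := hΓpath i j hij
      obtain ⟨m, hm⟩ := DS.dedup_path (Γ i j) i j hh hl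
      exact ⟨m, fun _ => hm⟩
    · exact ⟨[], fun h => absurd h hij⟩
  choose m hm using hex
  have hmemΓ : ∀ i j e, i ≠ j → e ∈ (m i j).zip (m i j).tail →
      e ∈ (Γ i j).zip (Γ i j).tail := fun i j e hij he => (hm i j hij).2.2.2.subset he
  have hQposΓ : ∀ i j e, i ≠ j → e ∈ (Γ i j).zip (Γ i j).tail →
      0 < π e.1 * P e.1 e.2 := fun i j e hij he =>
    mul_pos (hπpos e.1) ((hΓpath i j hij).2.2.2 e he)
  -- per-pair Poincaré inequality
  have hpair : ∀ i j : Fin n, i ≠ j → (x i - x j) ^ 2 ≤ plen π P (Γ i j) *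
      ∑ u, ∑ v, (if (u, v) ∈ (m i j).zip (m i j).tail
        then π u * P u v * (x u - x v) ^ 2 else 0) := by
    intro i j hij
    obtain ⟨hnd, hh, hl, hsub⟩ := hm i j hij
    set E := (m i j).zip (m i j).tail with hE
    have hndE : E.Nodup := DS.nodup_edges hnd
    set t := E.toFinset with ht
    have hQpos : ∀ e ∈ t, 0 < π e.1 * P e.1 e.2 := fun e he =>
      hQposΓ i j e hij (hmemΓ i j e hij (List.mem_toFinset.mp he))
    have htel : ∑ e ∈ t, (x e.2 - x e.1) = x j - x i := by
      rw [List.sum_toFinset _ hndE]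
      exact DS.telescope x (m i j) i j hh hl
    have hcs := DS.cs (fun e => π e.1 * P e.1 e.2) (fun e => x e.2 - x e.1) t hQpos
    rw [htel] at hcs
    have hsq : ∑ e ∈ t, π e.1 * P e.1 e.2 * (x e.2 - x e.1) ^ 2
        = ∑ e ∈ t, π e.1 * P e.1 e.2 * (x e.1 - x e.2) ^ 2 :=
      Finset.sum_congr rfl fun e _ => by ring
    rw [hsq] at hcs
    have hplen : ∑ e ∈ t, (π e.1 * P e.1 e.2)⁻¹ ≤ plen π P (Γ i j) := by
      rw [List.sum_toFinset _ hndE]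
      exact List.Sublist.sum_le_sum (hsub.map (fun e => (π e.1 * P e.1 e.2)⁻¹))
        (fun a ha => by
          obtain ⟨e, _, rfl⟩ := List.mem_map.mp ha
          exact inv_nonneg.mpr (mul_nonneg (hπpos e.1).le (hPnn e.1 e.2)))
    have hg : ∑ u, ∑ v, (if (u, v) ∈ E then π u * P u v * (x u - x v) ^ 2 else 0)
        = ∑ e ∈ t, π e.1 * P e.1 e.2 * (x e.1 - x e.2) ^ 2 := by
      rw [← Finset.sum_product']
      simp_rw [← List.mem_toFinset]
      rw [Finset.sum_ite_mem, Finset.univ_product_univ, Finset.univ_inter]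
    have hgnn : 0 ≤ ∑ e ∈ t, π e.1 * P e.1 e.2 * (x e.1 - x e.2) ^ 2 :=
      Finset.sum_nonneg fun e he => mul_nonneg (hQpos e he).le (sq_nonneg _)
    calc (x i - x j) ^ 2 = (x j - x i) ^ 2 := by ring
      _ ≤ (∑ e ∈ t, (π e.1 * P e.1 e.2)⁻¹) * ∑ e ∈ t, π e.1 * P e.1 e.2 * (x e.1 - x e.2) ^ 2 :=
          hcs
      _ ≤ plen π P (Γ i j) * ∑ e ∈ t, π e.1 * P e.1 e.2 * (x e.1 - x e.2) ^ 2 :=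
          mul_le_mul_of_nonneg_right hplen hgnn
      _ = _ := by rw [hg]
  -- nonnegativity of plen
  have hplennn : ∀ a b : Fin n, 0 ≤ plen π P (Γ a b) := by
    intro a b
    refine List.sum_nonneg fun r hr => ?_
    obtain ⟨e, _, rfl⟩ := List.mem_map.mp hr
    exact inv_nonneg.mpr (mul_nonneg (hπpos e.1).le (hPnn e.1 e.2))
  have hdnn : ∀ u v : Fin n, 0 ≤ π u * P u v * (x u - x v) ^ 2 := fun u v =>
    mul_nonneg (mul_nonneg (hπpos u).le (hPnn u v)) (sq_nonneg _)
  -- step 1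
  have hstep1 : 2 * nx2 ≤ ∑ i, ∑ j, (if i ≠ j
      then plen π P (Γ i j) * π i * π j *
        (∑ u, ∑ v, (if (u, v) ∈ (m i j).zip (m i j).tail
          then π u * P u v * (x u - x v) ^ 2 else 0)) else 0) := by
    rw [← hvar]
    refine Finset.sum_le_sum fun i _ => Finset.sum_le_sum fun j _ => ?_
    by_cases hij : i ≠ j
    · rw [if_pos hij]
      have h1 := hpair i j hij
      have h2 : 0 ≤ π i * π j := mul_nonneg (hπpos i).le (hπpos j).le
      calc π i * π j * (x i - x j) ^ 2
          ≤ π i * π j * (plen π P (Γ i j) *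
            (∑ u, ∑ v, (if (u, v) ∈ (m i j).zip (m i j).tail
              then π u * P u v * (x u - x v) ^ 2 else 0))) :=
            mul_le_mul_of_nonneg_left h1 h2
        _ = _ := by ring
    · push_neg at hij
      subst hij
      rw [if_neg (by simp)]
      simp
  -- step 2 : reorganize
  have hstep2 : (∑ i, ∑ j, (if i ≠ j
      then plen π P (Γ i j) * π i * π j *
        (∑ u, ∑ v, (if (u, v) ∈ (m i j).zip (m i j).tail
          then π u * P u v * (x u - x v) ^ 2 else 0)) else 0))
      = ∑ u, ∑ v, (∑ i, ∑ j, (if i ≠ j ∧ (u, v) ∈ (m i j).zip (m i j).tail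
          then plen π P (Γ i j) * π i * π j else 0)) * (π u * P u v * (x u - x v) ^ 2) := by
    have lhs_eq : ∀ i j : Fin n, (if i ≠ j
        then plen π P (Γ i j) * π i * π j *
          (∑ u, ∑ v, (if (u, v) ∈ (m i j).zip (m i j).tail
            then π u * P u v * (x u - x v) ^ 2 else 0)) else 0)
        = ∑ u, ∑ v, (if i ≠ j ∧ (u, v) ∈ (m i j).zip (m i j).tail
            then (plen π P (Γ i j) * π i * π j) * (π u * P u v * (x u - x v) ^ 2) else 0) := by
      intro i j
      by_cases hij : i ≠ j
      · rw [if_pos hij, Finset.mul_sum]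
        refine Finset.sum_congr rfl fun u _ => ?_
        rw [Finset.mul_sum]
        refine Finset.sum_congr rfl fun v _ => ?_
        by_cases hmem : (u, v) ∈ (m i j).zip (m i j).tail
        · rw [if_pos hmem, if_pos ⟨hij, hmem⟩]
        · rw [if_neg hmem, if_neg (by tauto), mul_zero]
      · rw [if_neg hij]
        symm
        exact Finset.sum_eq_zero fun u _ => Finset.sum_eq_zero fun v _ => by
          rw [if_neg (by tauto)]
    simp_rw [lhs_eq]
    rw [DS.sum_swap4]
    refine Finset.sum_congr rfl fun u _ => Finset.sum_congr rfl fun v _ => ?_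
    rw [Finset.sum_mul]
    refine Finset.sum_congr rfl fun i _ => ?_
    rw [Finset.sum_mul]
    refine Finset.sum_congr rfl fun j _ => ?_
    split
    · rfl
    · rw [zero_mul]
  -- step 3 : bound by κ'
  have hstep3 : ∑ u, ∑ v, (∑ i, ∑ j, (if i ≠ j ∧ (u, v) ∈ (m i j).zip (m i j).tail
          then plen π P (Γ i j) * π i * π j else 0)) * (π u * P u v * (x u - x v) ^ 2)
      ≤ ∑ u, ∑ v, κ' * (π u * P u v * (x u - x v) ^ 2) := by
    refine Finset.sum_le_sum fun u _ => Finset.sum_le_sum fun v _ => ?_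
    by_cases hPuv : 0 < P u v
    · refine mul_le_mul_of_nonneg_right ?_ (hdnn u v)
      refine le_trans ?_ (hκub u v hPuv)
      refine Finset.sum_le_sum fun i _ => Finset.sum_le_sum fun j _ => ?_
      by_cases hc : i ≠ j ∧ (u, v) ∈ (m i j).zip (m i j).tail
      · rw [if_pos hc, if_pos ⟨hc.1, hmemΓ i j (u, v) hc.1 hc.2⟩]
      · rw [if_neg hc]
        split
        · next hc2 => exact mul_nonneg (mul_nonneg (hplennn i j) (hπpos i).le) (hπpos j).le
        · exact le_rfl
    · have hz : (∑ i : Fin n, ∑ j : Fin n, (if i ≠ j ∧ (u, v) ∈ (m i j).zip (m i j).tail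
          then plen π P (Γ i j) * π i * π j else 0)) = 0 := by
        refine Finset.sum_eq_zero fun i _ => Finset.sum_eq_zero fun j _ => ?_
        rw [if_neg]
        rintro ⟨hij, hmem⟩
        exact hPuv ((hΓpath i j hij).2.2.2 (u, v) (hmemΓ i j (u, v) hij hmem))
      rw [hz, zero_mul]
      exact mul_nonneg hκpos.le (hdnn u v)
  have hstep4 : ∑ u, ∑ v, κ' * (π u * P u v * (x u - x v) ^ 2) = κ' * (2 * (1 - l) * nx2) := by
    simp_rw [← Finset.mul_sum]
    rw [hdir]
  have hkey : 2 * nx2 ≤ κ' * (2 * (1 - l) * nx2) := by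
    calc 2 * nx2 ≤ _ := hstep1
      _ = _ := hstep2
      _ ≤ _ := hstep3
      _ = _ := hstep4
  have h1 : 1 ≤ κ' * (1 - l) := by nlinarith [hnxpos]
  have h2 : 1 / κ' ≤ 1 - l := by
    rw [div_le_iff₀ hκpos]
    nlinarith
  linarith

lemma DS.exists_eigen {n : ℕ} (hn : 2 ≤ n) (P : Matrix (Fin n) (Fin n) ℝ) (π : Fin n → ℝ)
    (hProw : ∀ i, ∑ j, P i j = 1) (hπpos : ∀ i, 0 < π i)
    (hrev : IsReversible π P) (hirr : IsIrreducibleM P) :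
    ∃ (l : ℝ) (x : Fin n → ℝ), x ≠ 0 ∧ (∑ i, π i * x i) = 0 ∧ P.mulVec x = l • x := by
  classical
  haveI : NeZero n := ⟨by omega⟩
  set q : Fin n → ℝ := fun i => Real.sqrt (π i) with hq
  have hqpos : ∀ i, 0 < q i := fun i => Real.sqrt_pos.mpr (hπpos i)
  have hqsq : ∀ i, q i * q i = π i := fun i => Real.mul_self_sqrt (hπpos i).le
  set S : Matrix (Fin n) (Fin n) ℝ := Matrix.of (fun i j => q i * P i j / q j) with hS
  have hSapp : ∀ i j, S i j = q i * P i j / q j := fun i j => rfl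
  have hSsymm : ∀ i j, S i j = S j i := by
    intro i j
    rw [hSapp, hSapp, div_eq_div_iff (hqpos j).ne' (hqpos i).ne']
    calc q i * P i j * q i = (q i * q i) * P i j := by ring
      _ = π i * P i j := by rw [hqsq]
      _ = π j * P j i := hrev i j
      _ = (q j * q j) * P j i := by rw [hqsq]
      _ = q j * P j i * q j := by ring
  have hherm : S.IsHermitian := by
    ext i j
    simp only [Matrix.conjTranspose_apply, star_trivial]
    exact hSsymm j i
  by_cases hone : ∀ k, hherm.eigenvalues k = 1
  · exfalso
    have hSone : S = 1 := by
      have hst := hherm.spectral_theorem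
      rw [show Matrix.diagonal (RCLike.ofReal ∘ hherm.eigenvalues) = (1 : Matrix (Fin n) (Fin n) ℝ)
        from by
          ext a b
          by_cases hab : a = b
          · subst hab; simp [hone a]
          · simp [Matrix.diagonal_apply_ne _ hab, Matrix.one_apply_ne hab]] at hst
      rw [map_one] at hst
      exact hst
    have hPone : P = 1 := by
      ext i j
      have hSij : S i j = (1 : Matrix (Fin n) (Fin n) ℝ) i j := by rw [hSone]
      rw [hSapp] at hSij
      by_cases hij : i = j
      · subst hij
        rw [Matrix.one_apply_eq, mul_comm, mul_div_assoc, div_self (hqpos i).ne', mul_one] at hSij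
        rw [Matrix.one_apply_eq, hSij]
      · rw [Matrix.one_apply_ne hij] at hSij
        rw [Matrix.one_apply_ne hij]
        rcases div_eq_zero_iff.mp hSij with h | h
        · rcases mul_eq_zero.mp h with h' | h'
          · exact absurd h' (hqpos i).ne'
          · exact h'
        · exact absurd h (hqpos j).ne'
    have h01 : (0 : Fin n) ≠ (1 : Fin n) := by
      intro h
      have := congrArg Fin.val h
      simp [Fin.val_one'] at this
      omega
    obtain ⟨k, hk⟩ := hirr 0 1
    rw [hPone, one_pow, Matrix.one_apply_ne h01] at hk
    exact lt_irrefl 0 hk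
  · push_neg at hone
    obtain ⟨k, hk⟩ := hone
    set y : Fin n → ℝ := ⇑(hherm.eigenvectorBasis k) with hy
    set μ : ℝ := hherm.eigenvalues k with hμ
    have hSy : S *ᵥ y = μ • y := hherm.mulVec_eigenvectorBasis k
    have hy0 : y ≠ 0 := by
      intro h0
      exact hherm.eigenvectorBasis.orthonormal.ne_zero k (by ext i; simpa using congrFun h0 i)
    have hSu : S *ᵥ q = q := by
      funext i
      show ∑ j, S i j * q j = q i
      calc ∑ j, S i j * q j = ∑ j, q i * P i j :=
            Finset.sum_congr rfl fun j _ => by rw [hSapp, div_mul_cancel₀ _ (hqpos j).ne']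
        _ = q i := by rw [← Finset.mul_sum, hProw, mul_one]
    have hdot : (∑ i, q i * y i) = 0 := by
      have hsym : ∑ i, q i * ((S *ᵥ y) i) = ∑ j, ((S *ᵥ q) j) * y j := by
        show ∑ i, q i * (∑ j, S i j * y j) = ∑ j, (∑ i, S j i * q i) * y j
        calc ∑ i, q i * (∑ j, S i j * y j)
            = ∑ i, ∑ j, q i * (S i j * y j) :=
              Finset.sum_congr rfl fun i _ => Finset.mul_sum _ _ _
          _ = ∑ j, ∑ i, q i * (S i j * y j) := Finset.sum_comm
          _ = ∑ j, (∑ i, S j i * q i) * y j := by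
              refine Finset.sum_congr rfl fun j _ => ?_
              rw [Finset.sum_mul]
              refine Finset.sum_congr rfl fun i _ => ?_
              rw [hSsymm j i]; ring
      rw [hSy, hSu] at hsym
      simp only [Pi.smul_apply, smul_eq_mul] at hsym
      have h2 : (μ - 1) * (∑ i, q i * y i) = 0 := by
        have hl : ∑ i, q i * (μ * y i) = μ * ∑ i, q i * y i := by
          rw [Finset.mul_sum]; exact Finset.sum_congr rfl fun i _ => by ring
        have hr : ∑ j, q j * y j = ∑ i, q i * y i := rfl
        rw [hl] at hsym
        linear_combination hsym
      rcases mul_eq_zero.mp h2 with h | h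
      · exact absurd (by linarith) hk
      · exact h
    refine ⟨μ, fun i => y i / q i, ?_, ?_, ?_⟩
    · intro h0
      apply hy0
      funext i
      have hi := congrFun h0 i
      simp only [Pi.zero_apply] at hi ⊢
      rcases div_eq_zero_iff.mp hi with h | h
      · exact h
      · exact absurd h (hqpos i).ne'
    · rw [← hdot]
      refine Finset.sum_congr rfl fun i _ => ?_
      rw [← hqsq i]
      calc (q i * q i) * (y i / q i) = q i * y i * (q i / q i) := by ring
        _ = q i * y i := by rw [div_self (hqpos i).ne', mul_one]
    · funext i
      have hSyi := congrFun hSy i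
      simp only [Pi.smul_apply, smul_eq_mul] at hSyi
      have hSyi' : ∑ j, S i j * y j = μ * y i := hSyi
      show ∑ j, P i j * (y j / q j) = μ * ((fun i => y i / q i) i)
      calc ∑ j, P i j * (y j / q j)
          = ∑ j, (S i j * y j) / q i := by
            refine Finset.sum_congr rfl fun j _ => ?_
            rw [hSapp, show (q i * P i j / q j * y j) / q i
              = (P i j * (y j / q j)) * (q i / q i) from by ring,
              div_self (hqpos i).ne', mul_one]
        _ = (∑ j, S i j * y j) / q i := by rw [← Finset.sum_div]
        _ = (μ * y i) / q i := by rw [hSyi']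
        _ = μ * (y i / q i) := by ring

theorem diaconis_stroock_bound {n : ℕ} (hn : 2 ≤ n)
    (P : Matrix (Fin n) (Fin n) ℝ) (π : Fin n → ℝ)
    (hP : IsStochastic P) (hirr : IsIrreducibleM P)
    (hπpos : ∀ i, 0 < π i) (hπsum : ∑ i, π i = 1)
    (hrev : IsReversible π P)
    (Γ : Fin n → Fin n → List (Fin n))
    (hΓpath : ∀ i j, i ≠ j → IsPathFrom P i j (Γ i j))
    (κ' : ℝ)
    (hκ' : κ' = sSup {c : ℝ | ∃ u v : Fin n, 0 < P u v ∧
      c = ∑ i : Fin n, ∑ j : Fin n,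
        if i ≠ j ∧ (u, v) ∈ (Γ i j).zip (Γ i j).tail
        then plen π P (Γ i j) * π i * π j else 0}) :
    lambda2 π P ≤ 1 - 1 / κ' := by
  classical
  haveI : NeZero n := ⟨by omega⟩
  obtain ⟨hPnn, hProw⟩ := hP
  -- the set defining κ'
  set S0 : Set ℝ := {c : ℝ | ∃ u v : Fin n, 0 < P u v ∧
      c = ∑ i : Fin n, ∑ j : Fin n,
        if i ≠ j ∧ (u, v) ∈ (Γ i j).zip (Γ i j).tail
        then plen π P (Γ i j) * π i * π j else 0} with hS0
  have hfin : S0.Finite := by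
    apply Set.Finite.subset (Set.finite_range (fun p : Fin n × Fin n =>
      ∑ i : Fin n, ∑ j : Fin n,
        if i ≠ j ∧ (p.1, p.2) ∈ (Γ i j).zip (Γ i j).tail
        then plen π P (Γ i j) * π i * π j else 0))
    rintro c ⟨u, v, _, rfl⟩
    exact ⟨(u, v), rfl⟩
  have hbdd : BddAbove S0 := hfin.bddAbove
  have hub : ∀ u v : Fin n, 0 < P u v →
      (∑ i : Fin n, ∑ j : Fin n, if i ≠ j ∧ (u, v) ∈ (Γ i j).zip (Γ i j).tail
        then plen π P (Γ i j) * π i * π j else 0) ≤ κ' := by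
    intro u v h
    rw [hκ']
    exact le_csSup hbdd ⟨u, v, h, rfl⟩
  have h01 : (0 : Fin n) ≠ (1 : Fin n) := by
    intro h
    have := congrArg Fin.val h
    simp [Fin.val_one'] at this
    omega
  have hκpos : 0 < κ' := by
    obtain ⟨hh, hl, hlen, hedge⟩ := hΓpath 0 1 h01
    have hEne : (Γ 0 1).zip (Γ 0 1).tail ≠ [] := by
      apply List.ne_nil_of_length_pos
      rw [List.length_zip, List.length_tail]
      omega
    obtain ⟨e, he⟩ := List.exists_mem_of_ne_nil _ hEne
    have hPe : 0 < P e.1 e.2 := hedge e he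
    have hmem : (∑ i : Fin n, ∑ j : Fin n,
        if i ≠ j ∧ (e.1, e.2) ∈ (Γ i j).zip (Γ i j).tail
        then plen π P (Γ i j) * π i * π j else 0) ∈ S0 := ⟨e.1, e.2, hPe, rfl⟩
    have hplenpos : 0 < plen π P (Γ 0 1) := by
      apply List.sum_pos
      · intro a ha
        obtain ⟨f, hf, rfl⟩ := List.mem_map.mp ha
        exact inv_pos.mpr (mul_pos (hπpos f.1) (hedge f hf))
      · simp only [ne_eq, List.map_eq_nil_iff]
        exact hEne
    have hnnterm : ∀ i j : Fin n, 0 ≤ (if i ≠ j ∧ (e.1, e.2) ∈ (Γ i j).zip (Γ i j).tail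
        then plen π P (Γ i j) * π i * π j else 0) := by
      intro i j
      split
      · next hc =>
        have : 0 ≤ plen π P (Γ i j) := by
          refine List.sum_nonneg fun r hr => ?_
          obtain ⟨f, _, rfl⟩ := List.mem_map.mp hr
          exact inv_nonneg.mpr (mul_nonneg (hπpos f.1).le (hPnn f.1 f.2))
        exact mul_nonneg (mul_nonneg this (hπpos i).le) (hπpos j).le
      · exact le_rfl
    have hsumpos : 0 < ∑ i : Fin n, ∑ j : Fin n,
        if i ≠ j ∧ (e.1, e.2) ∈ (Γ i j).zip (Γ i j).tail
        then plen π P (Γ i j) * π i * π j else 0 := by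
      refine Finset.sum_pos' (fun i _ => Finset.sum_nonneg fun j _ => hnnterm i j)
        ⟨0, Finset.mem_univ _, ?_⟩
      refine Finset.sum_pos' (fun j _ => hnnterm 0 j) ⟨1, Finset.mem_univ _, ?_⟩
      rw [if_pos ⟨h01, by simpa using he⟩]
      exact mul_pos (mul_pos hplenpos (hπpos 0)) (hπpos 1)
    calc (0 : ℝ) < _ := hsumpos
      _ ≤ κ' := by rw [hκ']; exact le_csSup hbdd hmem
  -- nonemptiness of the eigenvalue set
  obtain ⟨l0, x0, hx00, hx0orth, hx0eig⟩ := DS.exists_eigen hn P π hProw hπpos hrev hirr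
  rw [lambda2]
  refine csSup_le ⟨l0, x0, hx00, hx0orth, hx0eig⟩ ?_
  rintro b ⟨x, hx0, horth, heig⟩
  exact DS.eig_bound P π hPnn hProw hπpos hπsum hrev Γ hΓpath κ' hκpos hub b x hx0 horth heig
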